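/- Let A be a d×n integer matrix of rank d with pointed cone, and B an n×m integer matrix (m = n − d) whose columns form a lattice basis of ker(A) ∩ Z^n. Set Q_0 = { y ∈ R^m : b_i·y > −1, i = 1,...,n }, where b_i are the rows of B. Then A is normal if and only if Q_0 + Z^m = R^m, i.e., every point of R^m differs from a point of Q_0 by an integer vector. -/

import Mathlib

open Matrix

private lemma castMulVec {a b : ℕ} (M : Matrix (Fin a) (Fin b) ℤ) (x : Fin b → ℤ) :
    (M.map (Int.cast : ℤ → ℝ)).mulVec (fun j => (x j : ℝ)) = fun i => ((M.mulVec x) i : ℝ) := by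
  funext i
  have := (RingHom.map_mulVec (Int.castRingHom ℝ) M x i).symm
  exact this

private lemma castMul {a b c : ℕ} (M : Matrix (Fin a) (Fin b) ℤ) (N : Matrix (Fin b) (Fin c) ℤ) :
    (M.map (Int.cast : ℤ → ℝ)) * (N.map (Int.cast : ℤ → ℝ)) = (M * N).map (Int.cast : ℤ → ℝ) := by
  ext i j
  simp [Matrix.mul_apply]

private lemma castDet {a : ℕ} (M : Matrix (Fin a) (Fin a) ℤ) :
    (M.map (Int.cast : ℤ → ℝ)).det = (M.det : ℝ) := by
  have := RingHom.map_det (Int.castRingHom ℝ) M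
  simpa [RingHom.mapMatrix_apply] using this.symm

/-- Theorem 4.2. Let `A` be a `d × n` integer matrix of rank `d` with
pointed cone, and `B` an `n × m` integer matrix (`m = n - d`) whose columns form a lattice
basis of `ker A ∩ ℤ^n`. Then `A` is normal if and only if `Q₀ + ℤ^m = ℝ^m`, where
`Q₀ = {y ∈ ℝ^m : bᵢ·y > -1 ∀i}` and the `bᵢ` are the rows of `B`. -/
theorem normal_iff_Q0_covers (d n m : ℕ) (hm : m = n - d)
    (A : Matrix (Fin d) (Fin n) ℤ) (B : Matrix (Fin n) (Fin m) ℤ)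
    (hrank : (A.map (Int.cast : ℤ → ℝ)).rank = d)
    (hpointed : ∃ c : Fin d → ℝ, ∀ j, 0 < ∑ i, c i * (A i j : ℝ))
    (hBinj : Function.Injective fun y : Fin m → ℤ => B.mulVec y)
    (hBrange : Set.range (fun y : Fin m → ℤ => B.mulVec y)
      = {x : Fin n → ℤ | A.mulVec x = 0}) :
    (∀ z : Fin d → ℤ,
        (∃ r : Fin n → ℝ, (∀ i, 0 ≤ r i) ∧
          (A.map (Int.cast : ℤ → ℝ)).mulVec r = fun i => (z i : ℝ)) →
        (∃ m' : Fin n → ℤ, A.mulVec m' = z) →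
        ∃ m' : Fin n → ℕ, A.mulVec (fun i => (m' i : ℤ)) = z)
    ↔
    (∀ p : Fin m → ℝ, ∃ v : Fin m → ℤ,
        ∀ i, (-1 : ℝ) < (B.map (Int.cast : ℤ → ℝ)).mulVec (p - fun j => (v j : ℝ)) i) := by
  set AR := A.map (Int.cast : ℤ → ℝ) with hARdef
  set BR := B.map (Int.cast : ℤ → ℝ) with hBRdef
  -- A * B = 0 over ℤ
  have hAB : ∀ v : Fin m → ℤ, A.mulVec (B.mulVec v) = 0 := by
    intro v
    have hmem : B.mulVec v ∈ Set.range (fun y : Fin m → ℤ => B.mulVec y) := ⟨v, rfl⟩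
    rw [hBrange] at hmem
    exact hmem
  have hABz : A * B = 0 := by
    ext j k
    have := congrFun (hAB (Pi.single k 1)) j
    simpa [Matrix.mulVec_mulVec, Matrix.mulVec_single, Matrix.mulVec, Matrix.col, Matrix.mul_apply, dotProduct, Pi.single_apply] using this
  -- real version of A * B = 0
  have hABR : ∀ p : Fin m → ℝ, AR.mulVec (BR.mulVec p) = 0 := by
    intro p
    rw [Matrix.mulVec_mulVec, hARdef, hBRdef, castMul, hABz]
    simp
  -- BR has trivial kernel
  have hGdet : (Bᵀ * B).det ≠ 0 := by
    intro h0
    obtain ⟨y, hy0, hy⟩ := Matrix.exists_mulVec_eq_zero_iff.mpr h0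
    have hsq : (B.mulVec y) ⬝ᵥ (B.mulVec y) = 0 := by
      have := congrArg (dotProduct y) hy
      rwa [← Matrix.mulVec_mulVec, Matrix.dotProduct_mulVec, Matrix.vecMul_transpose,
        dotProduct_zero] at this
    have hBy : B.mulVec y = 0 := dotProduct_self_eq_zero.mp hsq
    exact hy0 (hBinj (by simpa using hBy))
  have hBRker : LinearMap.ker BR.mulVecLin = ⊥ := by
    rw [← Matrix.ker_mulVecLin_transpose_mul_self]
    have hmap : BRᵀ * BR = (Bᵀ * B).map (Int.cast : ℤ → ℝ) := by
      rw [hBRdef, ← Matrix.transpose_map, castMul]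
    rw [LinearMap.ker_eq_bot']
    intro c hc
    rw [Matrix.mulVecLin_apply, hmap] at hc
    have hdet : ((Bᵀ * B).map (Int.cast : ℤ → ℝ)).det ≠ 0 := by
      rw [castDet]
      exact_mod_cast hGdet
    have hunit : IsUnit ((Bᵀ * B).map (Int.cast : ℤ → ℝ)).det := hdet.isUnit
    calc c = (1 : Matrix (Fin m) (Fin m) ℝ).mulVec c := by simp
      _ = (((Bᵀ * B).map (Int.cast : ℤ → ℝ))⁻¹ * ((Bᵀ * B).map (Int.cast : ℤ → ℝ))).mulVec c := by
          rw [Matrix.nonsing_inv_mul _ hunit]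
      _ = ((Bᵀ * B).map (Int.cast : ℤ → ℝ))⁻¹.mulVec (((Bᵀ * B).map (Int.cast : ℤ → ℝ)).mulVec c) := by
          rw [Matrix.mulVec_mulVec]
      _ = 0 := by rw [hc, Matrix.mulVec_zero]
  -- dimension count: range BR = ker AR
  have hdn : d ≤ n := by
    have := AR.rank_le_card_width
    simpa [hrank] using this
  have hRN_A := LinearMap.finrank_range_add_finrank_ker AR.mulVecLin
  have hRN_B := LinearMap.finrank_range_add_finrank_ker BR.mulVecLin
  rw [Module.finrank_fin_fun] at hRN_A hRN_B
  have hrangeA : Module.finrank ℝ (LinearMap.range AR.mulVecLin) = d := hrank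
  have hkerB : Module.finrank ℝ (LinearMap.ker BR.mulVecLin) = 0 := by
    rw [hBRker]; simp
  have hkerA : Module.finrank ℝ (LinearMap.ker AR.mulVecLin) = m := by omega
  have hrangeB : Module.finrank ℝ (LinearMap.range BR.mulVecLin) = m := by omega
  have hle : LinearMap.range BR.mulVecLin ≤ LinearMap.ker AR.mulVecLin := by
    rintro - ⟨p, rfl⟩
    rw [LinearMap.mem_ker]
    simpa [Matrix.mulVecLin_apply] using hABR p
  have heq : LinearMap.range BR.mulVecLin = LinearMap.ker AR.mulVecLin :=
    Submodule.eq_of_le_of_finrank_le hle (by rw [hkerA, hrangeB])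
  have hker : ∀ w : Fin n → ℝ, AR.mulVec w = 0 → ∃ p : Fin m → ℝ, BR.mulVec p = w := by
    intro w hw
    have hmem : w ∈ LinearMap.ker AR.mulVecLin := by
      rw [LinearMap.mem_ker, Matrix.mulVecLin_apply]; exact hw
    rw [← heq] at hmem
    obtain ⟨p, hp⟩ := hmem
    exact ⟨p, hp⟩
  constructor
  · -- normal → covering
    intro hnorm p
    set x : Fin n → ℝ := BR.mulVec p with hx
    set mc : Fin n → ℤ := fun i => ⌈x i⌉ with hmc
    set z : Fin d → ℤ := A.mulVec mc with hz
    obtain ⟨m'', hm''⟩ := hnorm z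
      ⟨(fun i => (mc i : ℝ)) - x, fun i => by
        simp only [Pi.sub_apply]
        have := Int.le_ceil (x i)
        simpa [hmc] using sub_nonneg.mpr this,
        by
          rw [Matrix.mulVec_sub, castMulVec, hx, hABR p, sub_zero, hz]⟩
      ⟨mc, rfl⟩
    -- y := mc - m''  is in the integer kernel
    have hy : A.mulVec (mc - fun i => (m'' i : ℤ)) = 0 := by
      rw [Matrix.mulVec_sub, hm'', hz, sub_self]
    have hymem : (mc - fun i => (m'' i : ℤ)) ∈ Set.range (fun y : Fin m → ℤ => B.mulVec y) := by
      rw [hBrange]; exact hy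
    obtain ⟨v, hv'⟩ := hymem
    have hv : B.mulVec v = mc - fun i => (m'' i : ℤ) := hv'
    refine ⟨v, fun i => ?_⟩
    have hBv : BR.mulVec (fun j => (v j : ℝ)) = fun i => ((B.mulVec v) i : ℝ) := castMulVec B v
    have hsub : BR.mulVec (p - fun j => (v j : ℝ)) i = x i - ((B.mulVec v) i : ℝ) := by
      rw [Matrix.mulVec_sub, hBv]
      simp [hx]
    rw [hsub, hv]
    have hceil : x i - (mc i : ℝ) > -1 := by
      have := Int.ceil_lt_add_one (x i)
      simp only [hmc]
      push_cast
      linarith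
    have : ((mc - fun i => (m'' i : ℤ)) i : ℝ) = (mc i : ℝ) - (m'' i : ℝ) := by
      push_cast [Pi.sub_apply]; ring
    rw [this]
    have hnn : (0 : ℝ) ≤ (m'' i : ℝ) := by positivity
    linarith
  · -- covering → normal
    intro hcov z hcone hlat
    obtain ⟨r, hr0, hrA⟩ := hcone
    obtain ⟨m', hm'⟩ := hlat
    have hker0 : AR.mulVec ((fun i => (m' i : ℝ)) - r) = 0 := by
      rw [Matrix.mulVec_sub, castMulVec, hm', hrA, sub_self]
    obtain ⟨p, hp⟩ := hker (_) hker0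
    obtain ⟨v, hv⟩ := hcov p
    set y : Fin n → ℤ := B.mulVec v with hy
    have hAy : A.mulVec y = 0 := by
      rw [hy]; exact hAB v
    have hm''A : A.mulVec (m' - y) = z := by
      rw [Matrix.mulVec_sub, hm', hAy, sub_zero]
    have hpos : ∀ i, 0 ≤ (m' - y) i := by
      intro i
      have h1 := hv i
      have hsub : BR.mulVec (p - fun j => (v j : ℝ)) i
          = ((m' i : ℝ) - r i) - (y i : ℝ) := by
        rw [Matrix.mulVec_sub, castMulVec]
        have := congrFun hp i
        simp only [Pi.sub_apply] at this ⊢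
        rw [this, ← hy]
      rw [hsub] at h1
      have : (-1 : ℝ) < ((m' - y) i : ℝ) := by
        have : ((m' - y) i : ℝ) = (m' i : ℝ) - (y i : ℝ) := by
          push_cast [Pi.sub_apply]; ring
        rw [this]
        have := hr0 i
        linarith
      have h2 : (-1 : ℤ) < (m' - y) i := by exact_mod_cast this
      omega
    refine ⟨fun i => ((m' - y) i).toNat, ?_⟩
    have : (fun i => (((m' - y) i).toNat : ℤ)) = m' - y := by
      funext i
      exact Int.toNat_of_nonneg (hpos i)
    rw [this, hm''A]
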